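/- The canonical frame of L = LIK X is downward confluent: for all prime theories Γ, Δ, Λ, if Γ ⊆ Δ and R_L Δ Λ, then there exists a prime theory Θ with R_L Γ Θ and Θ ⊆ Λ. -/

import Mathlib

/-- Formulas of intuitionistic modal logic. -/
inductive Formula : Type where
  | atom : ℕ → Formula
  | top  : Formula
  | bot  : Formula
  | and  : Formula → Formula → Formula
  | or   : Formula → Formula → Formula
  | imp  : Formula → Formula → Formula
  | box  : Formula → Formula
  | dia  : Formula → Formula
deriving DecidableEq


/-- The three optional extension axioms D, T, 4. -/
inductive ModAx : Type where
  | D : ModAx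
  | T : ModAx
  | Four : ModAx
deriving DecidableEq

/-- The Hilbert system LIK X: a complete Hilbert base for intuitionistic
propositional logic (as axiom schemata, hence all substitution instances of
IPL theorems are derivable), the modal axioms K□, K◇, N, DP, RV, the
extension axioms D, T, 4 according to membership in `X`, with rules
modus ponens and necessitation. -/
inductive LIK (X : Set ModAx) : Formula → Prop where
  | a1 (A B : Formula) : LIK X (A.imp (B.imp A))
  | a2 (A B C : Formula) : LIK X ((A.imp (B.imp C)).imp ((A.imp B).imp (A.imp C)))
  | a3 (A B : Formula) : LIK X ((A.and B).imp A)
  | a4 (A B : Formula) : LIK X ((A.and B).imp B)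
  | a5 (A B : Formula) : LIK X (A.imp (B.imp (A.and B)))
  | a6 (A B : Formula) : LIK X (A.imp (A.or B))
  | a7 (A B : Formula) : LIK X (B.imp (A.or B))
  | a8 (A B C : Formula) : LIK X ((A.imp C).imp ((B.imp C).imp ((A.or B).imp C)))
  | exfalso (A : Formula) : LIK X (Formula.bot.imp A)
  | truth : LIK X Formula.top
  | kbox (A B : Formula) :
      LIK X ((Formula.box (A.imp B)).imp ((Formula.box A).imp (Formula.box B)))
  | kdia (A B : Formula) :
      LIK X ((Formula.box (A.imp B)).imp ((Formula.dia A).imp (Formula.dia B)))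
  | nax : LIK X ((Formula.dia Formula.bot).imp Formula.bot)
  | dp (A B : Formula) :
      LIK X ((Formula.dia (A.or B)).imp ((Formula.dia A).or (Formula.dia B)))
  | rv (A B : Formula) :
      LIK X ((Formula.box (A.or B)).imp ((Formula.dia A).or (Formula.box B)))
  | dax : ModAx.D ∈ X → LIK X (Formula.dia Formula.top)
  | tax (A : Formula) : ModAx.T ∈ X →
      LIK X (((Formula.box A).imp A).and (A.imp (Formula.dia A)))
  | fourax (A : Formula) : ModAx.Four ∈ X →
      LIK X (((Formula.box A).imp (Formula.box (Formula.box A))).and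
        ((Formula.dia (Formula.dia A)).imp (Formula.dia A)))
  | mp (A B : Formula) : LIK X (A.imp B) → LIK X A → LIK X B
  | nec (A : Formula) : LIK X A → LIK X (Formula.box A)

/-- A theory for L = LIK X: contains all L-derivable formulas and is closed
under modus ponens. -/
def IsTheory (X : Set ModAx) (Γ : Set Formula) : Prop :=
  (∀ A, LIK X A → A ∈ Γ) ∧ ∀ A B, Formula.imp A B ∈ Γ → A ∈ Γ → B ∈ Γ

/-- A prime theory: a proper theory (⊥ ∉ Γ) deciding disjunctions. -/
def IsPrime (X : Set ModAx) (Γ : Set Formula) : Prop :=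
  IsTheory X Γ ∧ Formula.bot ∉ Γ ∧ ∀ A B, Formula.or A B ∈ Γ → A ∈ Γ ∨ B ∈ Γ

/-- The canonical accessibility relation:
`R_L Γ Δ` iff `□Γ ⊆ Δ` and `◇Δ ⊆ Γ`. -/
def CanR (Γ Δ : Set Formula) : Prop :=
  (∀ A, Formula.box A ∈ Γ → A ∈ Δ) ∧ (∀ A, A ∈ Δ → Formula.dia A ∈ Γ)


/-! ### Auxiliary Hilbert-style lemmas -/

section Aux

variable {X : Set ModAx}

private lemma lik_id (A : Formula) : LIK X (A.imp A) :=
  LIK.mp _ _ (LIK.mp _ _ (LIK.a2 A (A.imp A) A) (LIK.a1 A (A.imp A))) (LIK.a1 A A)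

private lemma lik_trans {A B C : Formula} (h1 : LIK X (A.imp B)) (h2 : LIK X (B.imp C)) :
    LIK X (A.imp C) :=
  LIK.mp _ _ (LIK.mp _ _ (LIK.a2 A B C) (LIK.mp _ _ (LIK.a1 (B.imp C) A) h2)) h1

private lemma lik_or_mono {A B C D : Formula} (h1 : LIK X (A.imp C)) (h2 : LIK X (B.imp D)) :
    LIK X ((A.or B).imp (C.or D)) :=
  LIK.mp _ _ (LIK.mp _ _ (LIK.a8 A B (C.or D)) (lik_trans h1 (LIK.a6 C D)))
    (lik_trans h2 (LIK.a7 C D))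

/-- Right-nested disjunction of a list with a final formula. -/
private def bigOr : List Formula → Formula → Formula
  | [], G => G
  | E :: Es, G => E.or (bigOr Es G)

private lemma bigOr_append (Es Fs : List Formula) (G : Formula) :
    bigOr (Es ++ Fs) G = bigOr Es (bigOr Fs G) := by
  induction Es with
  | nil => rfl
  | cons E Es ih => simp [bigOr, ih]

private lemma bigOr_intro (Es : List Formula) (G : Formula) :
    LIK X (G.imp (bigOr Es G)) := by
  induction Es with
  | nil => exact lik_id G
  | cons E Es ih => exact lik_trans ih (LIK.a7 E (bigOr Es G))

private lemma bigOr_mono {G G' : Formula} (Es : List Formula) (h : LIK X (G.imp G')) :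
    LIK X ((bigOr Es G).imp (bigOr Es G')) := by
  induction Es with
  | nil => exact h
  | cons E Es ih => exact lik_or_mono (lik_id E) ih

/-- A formula is "bad" (relative to Γ and Λ) if it provably implies a
disjunction of formulas whose diamonds are outside Γ, capped by a formula
outside Λ. Bad formulas are the ones that must be kept out of Θ. -/
private def Bad (X : Set ModAx) (Γ Λ : Set Formula) (D : Formula) : Prop :=
  ∃ Es G, (∀ E ∈ Es, Formula.dia E ∉ Γ) ∧ G ∉ Λ ∧ LIK X (D.imp (bigOr Es G))

/-- Badness is closed under disjunction (uses that Λ is prime). -/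
private lemma bad_or {Γ Λ : Set Formula} (hΛ : IsPrime X Λ) {D₁ D₂ : Formula}
    (h1 : Bad X Γ Λ D₁) (h2 : Bad X Γ Λ D₂) : Bad X Γ Λ (D₁.or D₂) := by
  obtain ⟨Es₁, G₁, hEs₁, hG₁, himp₁⟩ := h1
  obtain ⟨Es₂, G₂, hEs₂, hG₂, himp₂⟩ := h2
  refine ⟨Es₁ ++ Es₂, G₁.or G₂, ?_, ?_, ?_⟩
  · intro E hE
    rcases List.mem_append.1 hE with h | h
    · exact hEs₁ E h
    · exact hEs₂ E h
  · intro hmem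
    rcases hΛ.2.2 _ _ hmem with h | h
    · exact hG₁ h
    · exact hG₂ h
  · rw [bigOr_append]
    have k1 : LIK X ((bigOr Es₁ G₁).imp (bigOr Es₁ (bigOr Es₂ (G₁.or G₂)))) :=
      bigOr_mono Es₁ (lik_trans (LIK.a6 G₁ G₂) (bigOr_intro Es₂ (G₁.or G₂)))
    have k2 : LIK X ((bigOr Es₂ G₂).imp (bigOr Es₁ (bigOr Es₂ (G₁.or G₂)))) :=
      lik_trans (bigOr_mono Es₂ (LIK.a7 G₁ G₂)) (bigOr_intro Es₁ _)
    exact LIK.mp _ _ (LIK.mp _ _ (LIK.a8 D₁ D₂ _) (lik_trans himp₁ k1))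
      (lik_trans himp₂ k2)

/-- Stripping the diamond-bad disjuncts using the RV axiom in a prime Γ. -/
private lemma strip {Γ : Set Formula} (hΓ : IsPrime X Γ) :
    ∀ (Es : List Formula) (G : Formula), (∀ E ∈ Es, Formula.dia E ∉ Γ) →
      Formula.box (bigOr Es G) ∈ Γ → Formula.box G ∈ Γ := by
  intro Es
  induction Es with
  | nil => intro G _ h; exact h
  | cons E Es ih =>
    intro G hEs hbox
    have hrv : (Formula.dia E).or (Formula.box (bigOr Es G)) ∈ Γ :=
      hΓ.1.2 _ _ (hΓ.1.1 _ (LIK.rv E (bigOr Es G))) hbox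
    rcases hΓ.2.2 _ _ hrv with h | h
    · exact absurd h (hEs E List.mem_cons_self)
    · exact ih G (fun E' hE' => hEs E' (List.mem_cons_of_mem E hE')) h

end Aux
/-- The canonical frame of L = LIK X is downward confluent. -/
theorem canonical_downward_confluent (X : Set ModAx)
    (Γ Δ Λ : Set Formula)
    (hΓ : IsPrime X Γ) (hΔ : IsPrime X Δ) (hΛ : IsPrime X Λ)
    (hsub : Γ ⊆ Δ) (hR : CanR Δ Λ) :
    ∃ Θ : Set Formula, IsPrime X Θ ∧ CanR Γ Θ ∧ Θ ⊆ Λ := by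
  classical
  -- boxed formulas cannot be bad
  have hboxBad : ∀ D : Formula, Formula.box D ∈ Γ → ¬ Bad X Γ Λ D := by
    rintro D hboxD ⟨Es, G, hEs, hG, himp⟩
    have h1 : Formula.box (bigOr Es G) ∈ Γ :=
      hΓ.1.2 _ _ (hΓ.1.2 _ _ (hΓ.1.1 _ (LIK.kbox D (bigOr Es G)))
        (hΓ.1.1 _ (LIK.nec _ himp))) hboxD
    have h2 : Formula.box G ∈ Γ := strip hΓ Es G hEs h1
    exact hG (hR.1 G (hsub h2))
  -- the base theory B = {A | □A ∈ Γ}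
  set B : Set Formula := {A | Formula.box A ∈ Γ} with hBdef
  have hBth : IsTheory X B :=
    ⟨fun A hA => hΓ.1.1 _ (LIK.nec A hA),
     fun A C hAC hA => hΓ.1.2 _ _ (hΓ.1.2 _ _ (hΓ.1.1 _ (LIK.kbox A C)) hAC) hA⟩
  -- the family of candidate theories
  set S : Set (Set Formula) :=
    {T | IsTheory X T ∧ B ⊆ T ∧ ∀ D ∈ T, ¬ Bad X Γ Λ D} with hSdef
  have hBS : B ∈ S := ⟨hBth, subset_rfl, fun D hD => hboxBad D hD⟩
  -- Zorn
  have hchainub : ∀ c ⊆ S, IsChain (· ⊆ ·) c → c.Nonempty →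
      ∃ ub ∈ S, ∀ s ∈ c, s ⊆ ub := by
    intro c hcS hchain hcne
    obtain ⟨t0, ht0⟩ := hcne
    refine ⟨⋃₀ c, ⟨⟨?_, ?_⟩, ?_, ?_⟩, fun s hs => Set.subset_sUnion_of_mem hs⟩
    · intro A hA; exact ⟨t0, ht0, (hcS ht0).1.1 A hA⟩
    · rintro A C ⟨t1, ht1, hAC⟩ ⟨t2, ht2, hA⟩
      rcases hchain.total ht1 ht2 with h | h
      · exact ⟨t2, ht2, (hcS ht2).1.2 A C (h hAC) hA⟩
      · exact ⟨t1, ht1, (hcS ht1).1.2 A C hAC (h hA)⟩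
    · exact (hcS ht0).2.1.trans (Set.subset_sUnion_of_mem ht0)
    · rintro D ⟨t, ht, hD⟩; exact (hcS ht).2.2 D hD
  obtain ⟨Θ, hBΘ, hΘS, hΘmax⟩ : ∃ Θ, B ⊆ Θ ∧ Θ ∈ S ∧ ∀ T ∈ S, Θ ⊆ T → T ⊆ Θ := by
    obtain ⟨Θ, hBΘ, hmax⟩ := zorn_subset_nonempty S hchainub B hBS
    exact ⟨Θ, hBΘ, hmax.1, fun T hT hsub' => hmax.le_of_ge hT hsub'⟩
  obtain ⟨hΘth, hBsubΘ, hΘgood⟩ := hΘS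
  -- Θ is contained in Λ
  have hΘΛ : Θ ⊆ Λ := by
    intro A hA
    by_contra hAΛ
    exact hΘgood A hA ⟨[], A, by simp, hAΛ, lik_id A⟩
  -- diamonds of Θ are in Γ
  have hΘdia : ∀ A ∈ Θ, Formula.dia A ∈ Γ := by
    intro A hA
    by_contra hdA
    refine hΘgood A hA ⟨[A], Formula.bot, ?_, hΛ.2.1, LIK.a6 A Formula.bot⟩
    intro E hE; rcases List.mem_singleton.1 hE with rfl; exact hdA
  -- Θ is proper
  have hΘbot : Formula.bot ∉ Θ := fun h => hΛ.2.1 (hΘΛ h)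
  -- Θ is prime
  have hΘprime : ∀ A₁ A₂, Formula.or A₁ A₂ ∈ Θ → A₁ ∈ Θ ∨ A₂ ∈ Θ := by
    intro A₁ A₂ hor
    by_contra hcon
    push_neg at hcon
    obtain ⟨h1, h2⟩ := hcon
    -- extension of Θ by a formula A
    have key : ∀ A : Formula, A ∉ Θ → ∃ C, (A.imp C) ∈ Θ ∧ Bad X Γ Λ C := by
      intro A hA
      set T : Set Formula := {C | (A.imp C) ∈ Θ} with hTdef
      have hTth : IsTheory X T :=
        ⟨fun C hC => hΘth.1 _ (LIK.mp _ _ (LIK.a1 C A) hC),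
         fun C D hCD hC =>
           hΘth.2 _ _ (hΘth.2 _ _ (hΘth.1 _ (LIK.a2 A C D)) hCD) hC⟩
      have hΘT : Θ ⊆ T := fun C hC => hΘth.2 _ _ (hΘth.1 _ (LIK.a1 C A)) hC
      have hAT : A ∈ T := hΘth.1 _ (lik_id A)
      have hTnS : T ∉ S := by
        intro hTS
        exact hA (hΘmax T hTS hΘT hAT)
      rw [hSdef] at hTnS
      simp only [Set.mem_setOf_eq, not_and] at hTnS
      have := hTnS hTth (hBsubΘ.trans hΘT)
      push_neg at this
      obtain ⟨C, hCT, hCbad⟩ := this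
      exact ⟨C, hCT, hCbad⟩
    obtain ⟨C₁, hC₁, hC₁bad⟩ := key A₁ h1
    obtain ⟨C₂, hC₂, hC₂bad⟩ := key A₂ h2
    -- C₁ ∨ C₂ ∈ Θ
    have ht1 : (A₁.imp (C₁.or C₂)) ∈ Θ :=
      hΘth.2 _ _ (hΘth.2 _ _ (hΘth.1 _ (LIK.a2 A₁ C₁ (C₁.or C₂)))
        (hΘth.2 _ _ (hΘth.1 _ (LIK.a1 (C₁.imp (C₁.or C₂)) A₁))
          (hΘth.1 _ (LIK.a6 C₁ C₂)))) hC₁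
    have ht2 : (A₂.imp (C₁.or C₂)) ∈ Θ :=
      hΘth.2 _ _ (hΘth.2 _ _ (hΘth.1 _ (LIK.a2 A₂ C₂ (C₁.or C₂)))
        (hΘth.2 _ _ (hΘth.1 _ (LIK.a1 (C₂.imp (C₁.or C₂)) A₂))
          (hΘth.1 _ (LIK.a7 C₁ C₂)))) hC₂
    have hCC : (C₁.or C₂) ∈ Θ :=
      hΘth.2 _ _ (hΘth.2 _ _ (hΘth.2 _ _ (hΘth.1 _ (LIK.a8 A₁ A₂ (C₁.or C₂))) ht1) ht2) hor
    exact hΘgood _ hCC (bad_or hΛ hC₁bad hC₂bad)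
  refine ⟨Θ, ⟨hΘth, hΘbot, hΘprime⟩, ⟨fun A hA => hBsubΘ hA, hΘdia⟩, hΘΛ⟩
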